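/- arXiv:2204.04446 — 2 statements merged into one kernel-verified Lean document; each statement's English description precedes it below -/
import Mathlib

section
/- Let γ ∈ ℝ and A ⊆ ℚ̄. If A has the γ-Bogomolov property, then the set A ∖ μ_A has the δ-Northcott property for every real δ > γ. -/
open Polynomial

noncomputable section

/-- The primitive integer minimal polynomial of an algebraic number `x ∈ ℂ`. -/
def intMinpoly (x : ℂ) : Polynomial ℤ :=
  (IsLocalization.integerNormalization (nonZeroDivisors ℤ) (minpoly ℚ x)).primPart

/-- `deg(x) = [ℚ(x):ℚ]`, the degree of an algebraic number. -/
def degQ (x : ℂ) : ℕ := (minpoly ℚ x).natDegree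

/-- The absolute logarithmic Weil height of an algebraic number `x`, given as
`(1/deg x) · log (|a₀| · ∏ max(1,|conjugate|))` where `a₀` is the leading coefficient of the
primitive integer minimal polynomial of `x` and the product runs over the complex roots
of that polynomial (i.e. the conjugates of `x`). -/
def weilHeight (x : ℂ) : ℝ :=
  (degQ x : ℝ)⁻¹ *
    Real.log (((intMinpoly x).leadingCoeff.natAbs : ℝ) *
      (((intMinpoly x).map (Int.castRingHom ℂ)).roots.map
        (fun z => max 1 ‖z‖)).prod)

/-- The `γ`-weighted Weil height `h_γ(x) = deg(x)^γ · h(x)`. -/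
def wheight (γ : ℝ) (x : ℂ) : ℝ := (degQ x : ℝ) ^ γ * weilHeight x

/-- `x` is a root of unity. -/
def IsRootOfUnity (x : ℂ) : Prop := ∃ n : ℕ, 0 < n ∧ x ^ n = 1

/-- `μ_A`, the set of roots of unity contained in `A`. -/
def muSet (A : Set ℂ) : Set ℂ := {a ∈ A | IsRootOfUnity a}

/-- `A` has the `γ`-Northcott property: for every `C > 0` there are only finitely many
`a ∈ A` with `h_γ(a) < C`. -/
def NorthcottProp (γ : ℝ) (A : Set ℂ) : Prop :=
  ∀ C : ℝ, 0 < C → {a ∈ A | wheight γ a < C}.Finite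

/-- `A` has the `γ`-Bogomolov property: for some `C > 0` there are only finitely many
`a ∈ A ∖ μ_A` with `h_γ(a) < C`. -/
def BogomolovProp (γ : ℝ) (A : Set ℂ) : Prop :=
  ∃ C : ℝ, 0 < C ∧ {a ∈ A \ muSet A | wheight γ a < C}.Finite

/-- The `γ`-Northcott number `Nor_γ(A) = inf {C > 0 | N_γ(A,C) = ∞}` (equal to `∞` if
`N_γ(A,C)` is finite for every `C`). -/
def northcottNumber (γ : ℝ) (A : Set ℂ) : EReal :=
  sInf {x : EReal | ∃ C : ℝ, x = (C : EReal) ∧ 0 < C ∧ ¬ {a ∈ A | wheight γ a < C}.Finite}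

/-- `I_N(A) = {γ ∈ ℝ | A has γ-(N)}`. -/
def IN (A : Set ℂ) : Set ℝ := {γ | NorthcottProp γ A}

/-- `I_B(A) = {γ ∈ ℝ | A has γ-(B)}`. -/
def IB (A : Set ℂ) : Set ℝ := {γ | BogomolovProp γ A}

lemma intMinpoly_ne_zero (x : ℂ) : intMinpoly x ≠ 0 :=
  Polynomial.primPart_ne_zero _

lemma degQ_pos {x : ℂ} (hx : IsAlgebraic ℚ x) : 0 < degQ x :=
  minpoly.natDegree_pos hx.isIntegral

lemma intMinpoly_natDegree (x : ℂ) : (intMinpoly x).natDegree = degQ x := by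
  obtain ⟨b, hb⟩ := IsLocalization.integerNormalization_map_to_map (nonZeroDivisors ℤ)
    (minpoly ℚ x)
  have hbne : (b : ℤ) ≠ 0 := nonZeroDivisors.coe_ne_zero b
  have h1 : ((IsLocalization.integerNormalization (nonZeroDivisors ℤ)
      (minpoly ℚ x)).map (algebraMap ℤ ℚ)).natDegree = degQ x := by
    rw [hb]
    rw [← Int.cast_smul_eq_zsmul ℚ, Polynomial.smul_eq_C_mul,
      Polynomial.natDegree_C_mul (by exact_mod_cast hbne)]
    rfl
  have h2 := Polynomial.natDegree_map_eq_of_injective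
    (f := algebraMap ℤ ℚ) (fun a b h => by exact_mod_cast h)
    (IsLocalization.integerNormalization (nonZeroDivisors ℤ) (minpoly ℚ x))
  rw [intMinpoly, Polynomial.natDegree_primPart, ← h1, h2]

lemma intMinpoly_aeval {x : ℂ} (hx : IsAlgebraic ℚ x) : aeval x (intMinpoly x) = 0 := by
  have h0 : aeval x (IsLocalization.integerNormalization (nonZeroDivisors ℤ)
      (minpoly ℚ x)) = 0 :=
    IsLocalization.integerNormalization_aeval_eq_zero _ _ (minpoly.aeval ℚ x)
  have hq : (IsLocalization.integerNormalization (nonZeroDivisors ℤ)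
      (minpoly ℚ x)) ≠ 0 := by
    rw [Ne, IsFractionRing.integerNormalization_eq_zero_iff]
    exact minpoly.ne_zero hx.isIntegral
  have := Polynomial.eq_C_content_mul_primPart (IsLocalization.integerNormalization
    (nonZeroDivisors ℤ) (minpoly ℚ x))
  rw [this, map_mul, aeval_C] at h0
  have hc : ((IsLocalization.integerNormalization (nonZeroDivisors ℤ)
      (minpoly ℚ x)).content : ℂ) ≠ 0 := by
    exact_mod_cast fun h => hq (Polynomial.content_eq_zero_iff.mp h)
  simpa [intMinpoly, hc] using h0

lemma intMinpoly_isRoot {x : ℂ} (hx : IsAlgebraic ℚ x) :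
    ((intMinpoly x).map (Int.castRingHom ℂ)).IsRoot x := by
  have := intMinpoly_aeval hx
  rwa [aeval_def, ← eval_map] at this


lemma northcott_finite (D : ℕ) (B : ℝ) (hB : 0 ≤ B) :
    {x : ℂ | IsAlgebraic ℚ x ∧ degQ x ≤ D ∧ weilHeight x ≤ B}.Finite := by
  classical
  set E : ℝ := Real.exp (D * B) with hE
  have hE1 : 1 ≤ E := Real.one_le_exp (by positivity)
  set K : ℤ := ⌈E ^ (D + 1) * (D.choose (D / 2))⌉ with hK
  have hfin := Polynomial.bUnion_roots_finite (Int.castRingHom ℂ) D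
      (Set.finite_Icc (-K) K)
  refine hfin.subset ?_
  rintro x ⟨hx, hxD, hxB⟩
  have hinj : Function.Injective (Int.castRingHom ℂ) := fun a b h => by
    have : ((a : ℤ) : ℂ) = ((b : ℤ) : ℂ) := h
    exact_mod_cast this
  set p : Polynomial ℤ := intMinpoly x with hp
  have hp0 : p ≠ 0 := intMinpoly_ne_zero x
  have hd : p.natDegree = degQ x := intMinpoly_natDegree x
  have hd1 : 0 < degQ x := degQ_pos hx
  set pm : Polynomial ℂ := p.map (Int.castRingHom ℂ) with hpm
  have hpm0 : pm ≠ 0 := (Polynomial.map_ne_zero_iff hinj).mpr hp0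
  set lc : ℂ := ((p.leadingCoeff : ℤ) : ℂ) with hlc
  have hlc0 : lc ≠ 0 := by
    rw [hlc]
    exact_mod_cast Polynomial.leadingCoeff_ne_zero.mpr hp0
  have hlcm : pm.leadingCoeff = lc := Polynomial.leadingCoeff_map_of_injective hinj p
  set a0 : ℝ := (p.leadingCoeff.natAbs : ℝ) with ha0def
  have ha0 : 1 ≤ a0 := by
    have h0 : p.leadingCoeff ≠ 0 := Polynomial.leadingCoeff_ne_zero.mpr hp0
    rw [ha0def]
    exact_mod_cast Nat.one_le_iff_ne_zero.mpr (Int.natAbs_ne_zero.mpr h0)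
  set P : ℝ := (pm.roots.map (fun z => max 1 ‖z‖)).prod with hPdef
  have hmem1 : ∀ y ∈ pm.roots.map (fun z => max 1 ‖z‖), 1 ≤ y := by
    intro y hy
    obtain ⟨z, _, rfl⟩ := Multiset.mem_map.mp hy
    exact le_max_left _ _
  have hP1 : 1 ≤ P := Multiset.one_le_prod hmem1
  set M : ℝ := a0 * P with hMdef
  have hM1 : 1 ≤ M := one_le_mul_of_one_le_of_one_le ha0 hP1
  have hwh : weilHeight x = (degQ x : ℝ)⁻¹ * Real.log M := rfl
  have hdpos : (0 : ℝ) < (degQ x : ℝ) := by exact_mod_cast hd1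
  have hlogM : Real.log M ≤ (degQ x : ℝ) * B := by
    rw [hwh] at hxB
    exact (inv_mul_le_iff₀ hdpos).mp hxB
  have hME : M ≤ E := by
    rw [← Real.log_le_iff_le_exp (lt_of_lt_of_le one_pos hM1)]
    refine hlogM.trans ?_
    have : (degQ x : ℝ) ≤ (D : ℝ) := by exact_mod_cast hxD
    exact mul_le_mul_of_nonneg_right this hB
  have hroots : ∀ z ∈ pm.roots, ‖z‖ ≤ M := by
    intro z hz
    calc ‖z‖ ≤ max 1 ‖z‖ := le_max_right _ _
      _ ≤ P := by
          obtain ⟨t, ht⟩ := Multiset.exists_cons_of_mem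
            (Multiset.mem_map_of_mem (fun z => max 1 ‖z‖) hz)
          rw [hPdef, ht, Multiset.prod_cons]
          refine le_mul_of_one_le_right ?_ (Multiset.one_le_prod ?_)
          · exact le_trans zero_le_one (le_max_left _ _)
          · intro y hy
            exact hmem1 y (ht ▸ Multiset.mem_cons_of_mem hy)
      _ ≤ M := le_mul_of_one_le_left (le_trans zero_le_one hP1) ha0
  set q : Polynomial ℂ := Polynomial.C lc⁻¹ * pm with hqdef
  have hqmonic : q.Monic := by
    rw [Polynomial.Monic, hqdef, Polynomial.leadingCoeff_mul, Polynomial.leadingCoeff_C,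
      hlcm, inv_mul_cancel₀ hlc0]
  have hqd : q.natDegree ≤ D := by
    rw [hqdef, Polynomial.natDegree_C_mul (inv_ne_zero hlc0), hpm,
      Polynomial.natDegree_map_eq_of_injective hinj, hd]
    exact hxD
  have hqroots : q.roots = pm.roots := Polynomial.roots_C_mul _ (inv_ne_zero hlc0)
  have hcoeffq : ∀ i, ‖q.coeff i‖ ≤ (M ⊔ 1) ^ D * (D.choose (D / 2)) := by
    intro i
    have := Polynomial.coeff_bdd_of_roots_le (RingHom.id ℂ) hqmonic
      (IsAlgClosed.splits_domain q) hqd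
      (fun z hz => by
        rw [Polynomial.map_id] at hz
        exact hroots z (hqroots ▸ hz)) i
    rwa [Polynomial.map_id] at this
  have hpmq : pm = Polynomial.C lc * q := by
    rw [hqdef, ← mul_assoc, ← Polynomial.C_mul, mul_inv_cancel₀ hlc0, Polynomial.C_1, one_mul]
  have hMsup : (M ⊔ 1) = M := sup_eq_left.mpr hM1
  have hcoeff : ∀ i, |((p.coeff i : ℤ) : ℝ)| ≤ E ^ (D + 1) * (D.choose (D / 2)) := by
    intro i
    have h1 : ‖pm.coeff i‖ = |((p.coeff i : ℤ) : ℝ)| := by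
      rw [hpm, Polynomial.coeff_map]
      exact Complex.norm_intCast _
    have h2 : ‖pm.coeff i‖ = ‖lc‖ * ‖q.coeff i‖ := by
      rw [hpmq, Polynomial.coeff_C_mul, norm_mul]
    have hlcabs : ‖lc‖ = a0 := by
      rw [hlc, Complex.norm_intCast, ← Int.cast_abs, ha0def]
      exact congrArg (Int.cast : ℤ → ℝ) (Int.abs_eq_natAbs _)
    have ha0M : a0 ≤ M := le_mul_of_one_le_right (le_trans zero_le_one ha0) hP1
    calc |((p.coeff i : ℤ) : ℝ)| = a0 * ‖q.coeff i‖ := by rw [← h1, h2, hlcabs]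
      _ ≤ M * ((M ⊔ 1) ^ D * (D.choose (D / 2))) := by
          refine mul_le_mul ha0M (hcoeffq i) (norm_nonneg _) (le_trans zero_le_one hM1)
      _ = M * M ^ D * (D.choose (D / 2)) := by rw [hMsup, hMdef]; ring
      _ ≤ E * E ^ D * (D.choose (D / 2)) := by
          have h0M : (0:ℝ) ≤ M := le_trans zero_le_one hM1
          gcongr
      _ = E ^ (D + 1) * (D.choose (D / 2)) := by ring
  simp only [Set.mem_iUnion]
  refine ⟨p, ⟨?_, ?_⟩, ?_⟩
  · rw [hd]; exact hxD
  · intro i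
    have := hcoeff i
    have hle : |((p.coeff i : ℤ) : ℝ)| ≤ (K : ℝ) :=
      this.trans (Int.le_ceil _)
    rw [← Int.cast_abs, Int.cast_le] at hle
    exact Set.mem_Icc.mpr (abs_le.mp hle)
  · exact Finset.mem_coe.mpr (Multiset.mem_toFinset.mpr
      ((Polynomial.mem_roots hpm0).mpr (intMinpoly_isRoot hx)))

/-- If `A ⊆ ℚ̄` has the `γ`-Bogomolov property, then `A ∖ μ_A` has the `δ`-Northcott
property for every `δ > γ`. -/
theorem northcott_of_bogomolov (γ : ℝ) (A : Set ℂ)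
    (hA : ∀ a ∈ A, IsAlgebraic ℚ a) (hB : BogomolovProp γ A) :
    ∀ δ : ℝ, γ < δ → NorthcottProp δ (A \ muSet A) := by
  intro δ hδ C' hC'
  obtain ⟨C, hC, hTfin⟩ := hB
  set D : ℕ := ⌈(C' / C) ^ (1 / (δ - γ))⌉₊ with hD
  set B : ℝ := max 0 (C' * max 1 ((D : ℝ) ^ (-δ))) with hBdef
  have hB0 : (0:ℝ) ≤ B := le_max_left _ _
  have hNfin := northcott_finite D B hB0
  refine (hTfin.union hNfin).subset ?_
  rintro a ⟨haA, haw⟩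
  by_cases hT : wheight γ a < C
  · exact Or.inl ⟨haA, hT⟩
  · right
    push_neg at hT
    have hxalg : IsAlgebraic ℚ a := hA a haA.1
    have hdnat : 0 < degQ a := degQ_pos hxalg
    set d : ℝ := (degQ a : ℝ) with hddef
    have hd0 : (0:ℝ) < d := by rw [hddef]; exact_mod_cast hdnat
    have hd1 : (1:ℝ) ≤ d := by rw [hddef]; exact_mod_cast hdnat
    set h : ℝ := weilHeight a with hhdef
    have hγ : wheight γ a = d ^ γ * h := rfl
    have hδw : wheight δ a = d ^ δ * h := rfl
    have hsub : (0:ℝ) < δ - γ := sub_pos.mpr hδ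
    have hkey : d ^ (δ - γ) * C < C' := by
      calc d ^ (δ - γ) * C ≤ d ^ (δ - γ) * (d ^ γ * h) := by
            refine mul_le_mul_of_nonneg_left (hγ ▸ hT) ?_
            exact (Real.rpow_pos_of_pos hd0 _).le
        _ = d ^ δ * h := by
            rw [← mul_assoc, ← Real.rpow_add hd0, sub_add_cancel]
        _ < C' := hδw ▸ haw
    have hdiv : d ^ (δ - γ) < C' / C := (lt_div_iff₀ hC).mpr hkey
    have hdlt : d < (C' / C) ^ (1 / (δ - γ)) := by
      have h2 := Real.rpow_lt_rpow (Real.rpow_nonneg hd0.le _) hdiv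
        (one_div_pos.mpr hsub)
      rwa [← Real.rpow_mul hd0.le, mul_one_div_cancel hsub.ne', Real.rpow_one] at h2
    have hdD : d ≤ (D : ℝ) := hdlt.le.trans (Nat.le_ceil _)
    have hdDnat : degQ a ≤ D := by rw [hddef] at hdD; exact_mod_cast hdD
    have hhB : h ≤ B := by
      have hnegpos : (0:ℝ) < d ^ (-δ) := Real.rpow_pos_of_pos hd0 _
      have hhle : h ≤ d ^ (-δ) * C' := by
        have h3 := mul_le_mul_of_nonneg_left (hδw ▸ haw).le hnegpos.le
        rwa [← mul_assoc, ← Real.rpow_add hd0, neg_add_cancel, Real.rpow_zero,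
          one_mul] at h3
      have hdle : d ^ (-δ) ≤ max 1 ((D : ℝ) ^ (-δ)) := by
        rcases le_or_gt 0 (-δ) with hs | hs
        · exact le_max_of_le_right (Real.rpow_le_rpow hd0.le hdD hs)
        · exact le_max_of_le_left (Real.rpow_le_one_of_one_le_of_nonpos hd1 hs.le)
      calc h ≤ d ^ (-δ) * C' := hhle
        _ ≤ max 1 ((D : ℝ) ^ (-δ)) * C' := by
            exact mul_le_mul_of_nonneg_right hdle hC'.le
        _ = C' * max 1 ((D : ℝ) ^ (-δ)) := mul_comm _ _
        _ ≤ B := le_max_right _ _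
    exact ⟨hxalg, hdDnat, hhB⟩

end
end

section
/- The field ℚ^tr of all totally real algebraic numbers has the γ-Northcott property for every real γ > 0. -/
open Polynomial

noncomputable section

/-- A complex number is totally real if it is algebraic over `ℚ` and all of its conjugates
(the complex roots of its minimal polynomial) are real. -/
def QtrSet : Set ℂ :=
  {x | IsAlgebraic ℚ x ∧ ∀ z ∈ ((minpoly ℚ x).map (algebraMap ℚ ℂ)).roots, z.im = 0}

namespace QtrAux

lemma mprod_nonneg {s : Multiset ℝ} (h : ∀ a ∈ s, 0 ≤ a) : 0 ≤ s.prod := by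
  induction s using Multiset.induction_on with
  | empty => simp
  | cons a s ih =>
    rw [Multiset.prod_cons]
    exact mul_nonneg (h a (Multiset.mem_cons_self a s))
      (ih fun b hb => h b (Multiset.mem_cons_of_mem hb))

lemma mprod_le_mprod {s : Multiset ℂ} (f g : ℂ → ℝ) (h0 : ∀ a ∈ s, 0 ≤ f a)
    (h : ∀ a ∈ s, f a ≤ g a) : (s.map f).prod ≤ (s.map g).prod := by
  induction s using Multiset.induction_on with
  | empty => simp
  | cons a s ih =>
    simp only [Multiset.map_cons, Multiset.prod_cons]
    have h1 : 0 ≤ (s.map f).prod := by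
      refine mprod_nonneg ?_
      intro b hb
      obtain ⟨c, hc, rfl⟩ := Multiset.mem_map.mp hb
      exact h0 c (Multiset.mem_cons_of_mem hc)
    refine mul_le_mul (h a (Multiset.mem_cons_self a s))
      (ih (fun b hb => h0 b (Multiset.mem_cons_of_mem hb))
          (fun b hb => h b (Multiset.mem_cons_of_mem hb))) h1
      (le_trans (h0 a (Multiset.mem_cons_self a s)) (h a (Multiset.mem_cons_self a s)))

lemma abs_msum_le {s : Multiset ℂ} : ‖s.sum‖ ≤ (s.map (fun z : ℂ => ‖z‖)).sum := by
  induction s using Multiset.induction_on with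
  | empty => simp
  | cons a s ih =>
    simp only [Multiset.sum_cons, Multiset.map_cons]
    exact le_trans (norm_add_le _ _) (by linarith)

variable {x : ℂ}

lemma exists_scalar (hx : IsAlgebraic ℚ x) :
    ∃ c : ℚ, c ≠ 0 ∧ (intMinpoly x).map (algebraMap ℤ ℚ) = c • minpoly ℚ x := by
  obtain ⟨b, hb⟩ := IsLocalization.integerNormalization_map_to_map (nonZeroDivisors ℤ)
      (minpoly ℚ x)
  set q := minpoly ℚ x with hq
  set n := IsLocalization.integerNormalization (nonZeroDivisors ℤ) q with hn
  have hq0 : q ≠ 0 := minpoly.ne_zero hx.isIntegral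
  have hb0 : (b : ℤ) ≠ 0 := nonZeroDivisors.coe_ne_zero b
  have hnz : n ≠ 0 := by
    intro h
    rw [h, Polynomial.map_zero] at hb
    have := hb.symm
    rw [smul_eq_zero] at this
    rcases this with h1 | h1
    · exact hb0 (by exact_mod_cast h1)
    · exact hq0 h1
  have hcont : n.content ≠ 0 := fun h => hnz (content_eq_zero_iff.mp h)
  have hcpp : n = C n.content * n.primPart := n.eq_C_content_mul_primPart
  refine ⟨((b : ℤ) : ℚ) / (n.content : ℚ), ?_, ?_⟩
  · apply div_ne_zero
    · exact_mod_cast hb0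
    · exact_mod_cast hcont
  · have hmap : n.map (algebraMap ℤ ℚ) =
        C ((n.content : ℤ) : ℚ) * (n.primPart.map (algebraMap ℤ ℚ)) := by
      conv_lhs => rw [hcpp]
      rw [Polynomial.map_mul, Polynomial.map_C]
      rfl
    have hcontQ : ((n.content : ℤ) : ℚ) ≠ 0 := by exact_mod_cast hcont
    have : C ((n.content : ℤ) : ℚ) * (n.primPart.map (algebraMap ℤ ℚ)) = ((b : ℤ) : ℚ) • q := by
      rw [← hmap, hb, ← Int.cast_smul_eq_zsmul ℚ, Polynomial.smul_eq_C_mul]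
    have h2 : (n.primPart.map (algebraMap ℤ ℚ)) =
        C ((n.content : ℤ) : ℚ)⁻¹ * (((b : ℤ) : ℚ) • q) := by
      rw [← this, ← mul_assoc, ← C_mul, inv_mul_cancel₀ hcontQ, C_1, one_mul]
    rw [intMinpoly, ← hn, h2, Polynomial.smul_eq_C_mul, Polynomial.smul_eq_C_mul,
      ← mul_assoc, ← C_mul]
    congr 1
    · rw [div_eq_inv_mul]

lemma intMinpoly_map_ratCast (hx : IsAlgebraic ℚ x) :
    ∃ c : ℚ, c ≠ 0 ∧ (intMinpoly x).map (Int.castRingHom ℂ) =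
      C (c : ℂ) * (minpoly ℚ x).map (algebraMap ℚ ℂ) := by
  obtain ⟨c, hc, h⟩ := exists_scalar hx
  refine ⟨c, hc, ?_⟩
  have : (Int.castRingHom ℂ) = (algebraMap ℚ ℂ).comp (algebraMap ℤ ℚ) := by
    exact RingHom.ext_int _ _
  rw [this, ← Polynomial.map_map, h, Polynomial.smul_eq_C_mul, Polynomial.map_mul,
    Polynomial.map_C]
  congr 2

lemma qC_ne_zero (hx : IsAlgebraic ℚ x) :
    (minpoly ℚ x).map (algebraMap ℚ ℂ) ≠ 0 := by
  exact (Polynomial.map_ne_zero_iff (algebraMap ℚ ℂ).injective).mpr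
    (minpoly.ne_zero hx.isIntegral)

lemma intMinpolyC_ne_zero (hx : IsAlgebraic ℚ x) :
    (intMinpoly x).map (Int.castRingHom ℂ) ≠ 0 := by
  obtain ⟨c, hc, h⟩ := intMinpoly_map_ratCast hx
  rw [h]
  exact mul_ne_zero (by simpa using hc) (qC_ne_zero hx)

lemma intMinpoly_ne_zero (hx : IsAlgebraic ℚ x) : intMinpoly x ≠ 0 := by
  intro h
  exact intMinpolyC_ne_zero hx (by rw [h, Polynomial.map_zero])

lemma roots_intMinpolyC (hx : IsAlgebraic ℚ x) :
    ((intMinpoly x).map (Int.castRingHom ℂ)).roots =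
      ((minpoly ℚ x).map (algebraMap ℚ ℂ)).roots := by
  obtain ⟨c, hc, h⟩ := intMinpoly_map_ratCast hx
  rw [h, ← Polynomial.smul_eq_C_mul, Polynomial.roots_smul_nonzero _ (by simpa using hc)]

lemma natDegree_intMinpolyC (hx : IsAlgebraic ℚ x) :
    ((intMinpoly x).map (Int.castRingHom ℂ)).natDegree = degQ x := by
  obtain ⟨c, hc, h⟩ := intMinpoly_map_ratCast hx
  rw [h, natDegree_C_mul (by simpa using hc), natDegree_map, degQ]

lemma natDegree_intMinpoly (hx : IsAlgebraic ℚ x) :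
    (intMinpoly x).natDegree = degQ x := by
  rw [← natDegree_intMinpolyC hx,
    natDegree_map_eq_of_injective (f := Int.castRingHom ℂ) Int.cast_injective]

lemma card_roots_intMinpolyC (hx : IsAlgebraic ℚ x) :
    Multiset.card ((intMinpoly x).map (Int.castRingHom ℂ)).roots = degQ x := by
  rw [Polynomial.splits_iff_card_roots.mp (IsAlgClosed.splits _),
    natDegree_intMinpolyC hx]

lemma isRoot_self (hx : IsAlgebraic ℚ x) :
    ((intMinpoly x).map (Int.castRingHom ℂ)).IsRoot x := by
  obtain ⟨c, hc, h⟩ := intMinpoly_map_ratCast hx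
  have : ((minpoly ℚ x).map (algebraMap ℚ ℂ)).eval x = 0 := by
    rw [Polynomial.eval_map, ← Polynomial.aeval_def, minpoly.aeval]
  rw [IsRoot, h, Polynomial.eval_mul, this, mul_zero]

lemma mem_roots_self (hx : IsAlgebraic ℚ x) :
    x ∈ ((intMinpoly x).map (Int.castRingHom ℂ)).roots :=
  (Polynomial.mem_roots (intMinpolyC_ne_zero hx)).mpr (isRoot_self hx)

lemma eval_intMinpolyC (n : ℤ) (x : ℂ) :
    ((intMinpoly x).map (Int.castRingHom ℂ)).eval (n : ℂ) = (((intMinpoly x).eval n : ℤ) : ℂ) := by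
  rw [Polynomial.eval_map]
  exact Polynomial.eval₂_at_apply (Int.castRingHom ℂ) n

lemma eval_int_ne_zero (hx : IsAlgebraic ℚ x) (n : ℤ) (hxn : x ≠ (n : ℂ)) :
    (intMinpoly x).eval n ≠ 0 := by
  intro h0
  obtain ⟨c, hc, h⟩ := intMinpoly_map_ratCast hx
  have h1 : ((intMinpoly x).map (Int.castRingHom ℂ)).eval (n : ℂ) = 0 := by
    rw [eval_intMinpolyC, h0, Int.cast_zero]
  rw [h, Polynomial.eval_mul, mul_eq_zero, Polynomial.eval_C] at h1
  have h2 : ((minpoly ℚ x).map (algebraMap ℚ ℂ)).eval (n : ℂ) = 0 := by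
    rcases h1 with h1 | h1
    · exact absurd (by exact_mod_cast h1) hc
    · exact h1
  -- transfer to ℚ
  have h3 : (minpoly ℚ x).eval ((n : ℚ)) = 0 := by
    have : ((minpoly ℚ x).map (algebraMap ℚ ℂ)).eval (algebraMap ℚ ℂ (n : ℚ)) =
        algebraMap ℚ ℂ ((minpoly ℚ x).eval (n : ℚ)) := by
      rw [Polynomial.eval_map]
      exact Polynomial.eval₂_at_apply (algebraMap ℚ ℂ) _
    have hcast : (algebraMap ℚ ℂ) ((n : ℚ)) = (n : ℂ) := by
      rw [eq_ratCast]; norm_cast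
    rw [hcast, h2] at this
    exact (map_eq_zero_iff _ (algebraMap ℚ ℂ).injective).mp this.symm
  -- so X - C n divides the irreducible minpoly
  have hdvd : (X - C ((n : ℚ))) ∣ minpoly ℚ x := dvd_iff_isRoot.mpr h3
  obtain ⟨u, hu⟩ := hdvd
  have hirr := minpoly.irreducible hx.isIntegral
  rcases hirr.isUnit_or_isUnit hu with h4 | h4
  · rw [Polynomial.isUnit_iff_degree_eq_zero, Polynomial.degree_X_sub_C] at h4
    exact one_ne_zero h4
  · obtain ⟨r, hr, hru⟩ := Polynomial.isUnit_iff.mp h4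
    have := minpoly.aeval ℚ x
    rw [hu, ← hru] at this
    simp only [map_mul, map_sub, Polynomial.aeval_C, Polynomial.aeval_X, mul_eq_zero] at this
    rcases this with h5 | h5
    · apply hxn
      have : x = algebraMap ℚ ℂ ((n : ℚ)) := by
        have := sub_eq_zero.mp h5
        rw [this]
      rw [this, eq_ratCast]; norm_cast
    · exact hr.ne_zero ((map_eq_zero_iff _ (algebraMap ℚ ℂ).injective).mp h5)

lemma one_le_leadAbs (hx : IsAlgebraic ℚ x) :
    (1 : ℝ) ≤ ((intMinpoly x).leadingCoeff.natAbs : ℝ) := by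
  have hlc : (intMinpoly x).leadingCoeff ≠ 0 :=
    Polynomial.leadingCoeff_ne_zero.mpr (intMinpoly_ne_zero hx)
  have : 1 ≤ (intMinpoly x).leadingCoeff.natAbs := Int.natAbs_pos.mpr hlc
  exact_mod_cast this


/-- The Mahler measure of (the minimal polynomial of) `x`. -/
def mah (x : ℂ) : ℝ :=
  ((intMinpoly x).leadingCoeff.natAbs : ℝ) *
    (((intMinpoly x).map (Int.castRingHom ℂ)).roots.map
      (fun z => max 1 ‖z‖)).prod

lemma mprod_one_le {s : Multiset ℝ} (h : ∀ a ∈ s, 1 ≤ a) : 1 ≤ s.prod := by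
  induction s using Multiset.induction_on with
  | empty => simp
  | cons a s ih =>
    rw [Multiset.prod_cons]
    have h1 : 1 ≤ a := h a (Multiset.mem_cons_self a s)
    have h2 : 1 ≤ s.prod := ih fun b hb => h b (Multiset.mem_cons_of_mem hb)
    calc (1:ℝ) = 1 * 1 := by ring
    _ ≤ a * s.prod := mul_le_mul h1 h2 zero_le_one (le_trans zero_le_one h1)

lemma one_le_maxprod (s : Multiset ℂ) :
    (1 : ℝ) ≤ (s.map (fun z => max 1 ‖z‖)).prod := by
  apply mprod_one_le
  intro a ha
  obtain ⟨z, _, rfl⟩ := Multiset.mem_map.mp ha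
  exact le_max_left _ _

lemma one_le_mah (hx : IsAlgebraic ℚ x) : 1 ≤ mah x := by
  have h1 := one_le_leadAbs hx
  have h2 := one_le_maxprod ((intMinpoly x).map (Int.castRingHom ℂ)).roots
  calc (1:ℝ) = 1 * 1 := by ring
  _ ≤ _ := mul_le_mul h1 h2 zero_le_one (le_trans zero_le_one h1)

lemma mah_pos (hx : IsAlgebraic ℚ x) : 0 < mah x := lt_of_lt_of_le one_pos (one_le_mah hx)

lemma weilHeight_eq (x : ℂ) : weilHeight x = (degQ x : ℝ)⁻¹ * Real.log (mah x) := rfl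

lemma weilHeight_nonneg (hx : IsAlgebraic ℚ x) : 0 ≤ weilHeight x := by
  rw [weilHeight_eq]
  exact mul_nonneg (by positivity) (Real.log_nonneg (one_le_mah hx))

lemma abs_leadingCoeffC (x : ℂ) :
    ‖((intMinpoly x).map (Int.castRingHom ℂ)).leadingCoeff‖ =
      ((intMinpoly x).leadingCoeff.natAbs : ℝ) := by
  rw [Polynomial.leadingCoeff_map_of_injective (f := Int.castRingHom ℂ) Int.cast_injective]
  show ‖((intMinpoly x).leadingCoeff : ℂ)‖ = _
  rw [Complex.norm_intCast, Nat.cast_natAbs]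
  push_cast
  rfl

lemma abs_eval (hx : IsAlgebraic ℚ x) (t : ℂ) :
    ‖((intMinpoly x).map (Int.castRingHom ℂ)).eval t‖ =
      ((intMinpoly x).leadingCoeff.natAbs : ℝ) *
        ((((intMinpoly x).map (Int.castRingHom ℂ)).roots.map
          (fun z => ‖t - z‖)).prod) := by
  set p := (intMinpoly x).map (Int.castRingHom ℂ) with hp
  have hcard : Multiset.card p.roots = p.natDegree := by
    rw [card_roots_intMinpolyC hx, natDegree_intMinpolyC hx]
  have hfact := Polynomial.C_leadingCoeff_mul_prod_multiset_X_sub_C hcard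
  conv_lhs => rw [← hfact]
  rw [Polynomial.eval_mul, Polynomial.eval_C, norm_mul, abs_leadingCoeffC,
    Polynomial.eval_multiset_prod, Multiset.map_map]
  have heq : (Multiset.map (eval t ∘ fun a => X - C a) p.roots) =
      Multiset.map (fun z => t - z) p.roots :=
    Multiset.map_congr rfl (fun z hz => by simp)
  rw [heq, show ∀ m : Multiset ℂ, ‖m.prod‖ = normHom m.prod from fun _ => rfl,
    map_multiset_prod, Multiset.map_map]
  rfl

lemma pointwise_real (t : ℝ) :
    2 * |(0:ℝ) - t| * |1 - t| * |(-1) - t| ≤ (max 1 |t|) ^ 4 := by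
  have h1 : |(0:ℝ) - t| = |t| := by rw [zero_sub, abs_neg]
  have h2 : |1 - t| * |(-1) - t| = |t ^ 2 - 1| := by
    rw [← abs_mul]
    have : (1 - t) * ((-1) - t) = t ^ 2 - 1 := by ring
    rw [this]
  rw [h1, mul_assoc, h2]
  set u := |t| with hu
  have hu0 : 0 ≤ u := abs_nonneg t
  have hut : t ^ 2 = u ^ 2 := (sq_abs t).symm
  rcases le_total u 1 with h | h
  · have hmax : max 1 u = 1 := max_eq_left h
    have habs : |t ^ 2 - 1| = 1 - u ^ 2 := by
      rw [hut, abs_sub_comm]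
      exact abs_of_nonneg (by nlinarith)
    rw [hmax, habs]
    nlinarith [sq_nonneg (3 * u ^ 2 - 1), sq_nonneg u, mul_nonneg hu0 (sq_nonneg (3 * u ^ 2 - 1)), mul_nonneg (mul_nonneg hu0 hu0) hu0]
  · have hmax : max 1 u = u := max_eq_right h
    have habs : |t ^ 2 - 1| = u ^ 2 - 1 := by
      rw [hut]
      exact abs_of_nonneg (by nlinarith)
    rw [hmax, habs]
    nlinarith [sq_nonneg (u - 1), sq_nonneg u, mul_nonneg (mul_nonneg hu0 hu0) hu0]

lemma pointwise_complex {z : ℂ} (hz : z.im = 0) :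
    2 * ‖(0:ℂ) - z‖ * ‖1 - z‖ * ‖(-1) - z‖ ≤
      (max 1 ‖z‖) ^ 4 := by
  have hzre : z = ((z.re : ℝ) : ℂ) := Complex.ext rfl (by simp [hz])
  set t := z.re
  have e0 : ‖(0:ℂ) - z‖ = |(0:ℝ) - t| := by
    rw [hzre]
    rw [show ((0:ℂ) - (t:ℂ)) = (((0 - t : ℝ)) : ℂ) by push_cast; ring]
    rw [Complex.norm_real, Real.norm_eq_abs]
  have e1 : ‖(1:ℂ) - z‖ = |(1:ℝ) - t| := by
    rw [hzre]
    rw [show ((1:ℂ) - (t:ℂ)) = (((1 - t : ℝ)) : ℂ) by push_cast; ring]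
    rw [Complex.norm_real, Real.norm_eq_abs]
  have e2 : ‖(-1:ℂ) - z‖ = |(-1:ℝ) - t| := by
    rw [hzre]
    rw [show ((-1:ℂ) - (t:ℂ)) = (((-1 - t : ℝ)) : ℂ) by push_cast; ring]
    rw [Complex.norm_real, Real.norm_eq_abs]
  have e3 : ‖z‖ = |t| := by rw [hzre]; rw [Complex.norm_real, Real.norm_eq_abs]
  rw [e0, e1, e2, e3]
  exact pointwise_real t

lemma one_le_abs_eval_int (hx : IsAlgebraic ℚ x) (n : ℤ) (hxn : x ≠ (n : ℂ)) :
    1 ≤ ‖((intMinpoly x).map (Int.castRingHom ℂ)).eval (n : ℂ)‖ := by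
  rw [eval_intMinpolyC]
  rw [Complex.norm_intCast]
  have := eval_int_ne_zero hx n hxn
  rw [← Int.cast_abs]
  exact_mod_cast Int.one_le_abs this

/-- Schinzel-type lower bound (with non-optimal constant `log 2 / 4`). -/
lemma schinzel_bound (hx : IsAlgebraic ℚ x)
    (him : ∀ z ∈ ((minpoly ℚ x).map (algebraMap ℚ ℂ)).roots, z.im = 0)
    (h0 : x ≠ 0) (h1 : x ≠ 1) (hm1 : x ≠ -1) :
    Real.log 2 / 4 ≤ weilHeight x := by
  set p := (intMinpoly x).map (Int.castRingHom ℂ) with hp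
  set r := p.roots with hr
  set d := degQ x with hd
  set A := ((intMinpoly x).leadingCoeff.natAbs : ℝ) with hA
  set Q := (r.map (fun z => max 1 ‖z‖)).prod with hQ
  have hA1 : 1 ≤ A := one_le_leadAbs hx
  have hQ1 : 1 ≤ Q := one_le_maxprod r
  have hcard : Multiset.card r = d := card_roots_intMinpolyC hx
  have hrim : ∀ z ∈ r, z.im = 0 := by
    intro z hzr
    exact him z (by rwa [← roots_intMinpolyC hx])
  -- product of the pointwise inequalities
  have hprod : (r.map (fun z => 2 * ‖(0:ℂ) - z‖ * ‖1 - z‖ *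
      ‖(-1) - z‖)).prod ≤ Q ^ 4 := by
    rw [hQ, ← Multiset.prod_map_pow]
    apply mprod_le_mprod
    · intro z hz
      positivity
    · intro z hz
      exact pointwise_complex (hrim z hz)
  -- decompose the left product
  have hdecomp : (r.map (fun z => 2 * ‖(0:ℂ) - z‖ * ‖1 - z‖ *
      ‖(-1) - z‖)).prod =
      2 ^ d * (r.map (fun z => ‖(0:ℂ) - z‖)).prod *
        (r.map (fun z => ‖(1:ℂ) - z‖)).prod *
        (r.map (fun z => ‖(-1:ℂ) - z‖)).prod := by
    rw [Multiset.prod_map_mul, Multiset.prod_map_mul, Multiset.prod_map_mul]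
    have hconst : (r.map (fun _ => (2:ℝ))).prod = 2 ^ d := by
      rw [Multiset.map_const', Multiset.prod_replicate, hcard]
    rw [hconst]
  set P0 := (r.map (fun z => ‖(0:ℂ) - z‖)).prod with hP0
  set P1 := (r.map (fun z => ‖(1:ℂ) - z‖)).prod with hP1
  set Pm1 := (r.map (fun z => ‖(-1:ℂ) - z‖)).prod with hPm1
  have hP0n : 0 ≤ P0 := mprod_nonneg (by intro a ha; obtain ⟨z,_,rfl⟩ := Multiset.mem_map.mp ha; positivity)
  have hP1n : 0 ≤ P1 := mprod_nonneg (by intro a ha; obtain ⟨z,_,rfl⟩ := Multiset.mem_map.mp ha; positivity)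
  have hPm1n : 0 ≤ Pm1 := mprod_nonneg (by intro a ha; obtain ⟨z,_,rfl⟩ := Multiset.mem_map.mp ha; positivity)
  -- evaluations are at least 1
  have hE0 : 1 ≤ A * P0 := by
    have := one_le_abs_eval_int hx 0 (by simpa using h0)
    rw [show (((0:ℤ)):ℂ) = (0:ℂ) by norm_num, abs_eval hx 0] at this
    exact this
  have hE1 : 1 ≤ A * P1 := by
    have := one_le_abs_eval_int hx 1 (by simpa using h1)
    rw [show (((1:ℤ)):ℂ) = (1:ℂ) by norm_num, abs_eval hx 1] at this
    exact this
  have hEm1 : 1 ≤ A * Pm1 := by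
    have := one_le_abs_eval_int hx (-1) (by simpa using hm1)
    rw [show (((-1:ℤ)):ℂ) = (-1:ℂ) by norm_num, abs_eval hx (-1)] at this
    exact this
  -- main inequality : 2 ^ d ≤ (A * Q) ^ 4
  have hmain : (2:ℝ) ^ d ≤ (A * Q) ^ 4 := by
    have t0 : (0:ℝ) ≤ 2 ^ d := by positivity
    have n0 : (0:ℝ) ≤ A * P0 := le_trans zero_le_one hE0
    have n1 : (0:ℝ) ≤ A * P1 := le_trans zero_le_one hE1
    have step1 : (2:ℝ) ^ d ≤ 2 ^ d * (A * P0) * (A * P1) * (A * Pm1) * A :=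
      calc (2:ℝ) ^ d ≤ 2 ^ d * (A * P0) := le_mul_of_one_le_right t0 hE0
      _ ≤ 2 ^ d * (A * P0) * (A * P1) := le_mul_of_one_le_right (mul_nonneg t0 n0) hE1
      _ ≤ 2 ^ d * (A * P0) * (A * P1) * (A * Pm1) :=
          le_mul_of_one_le_right (mul_nonneg (mul_nonneg t0 n0) n1) hEm1
      _ ≤ 2 ^ d * (A * P0) * (A * P1) * (A * Pm1) * A :=
          le_mul_of_one_le_right (mul_nonneg (mul_nonneg (mul_nonneg t0 n0) n1)
            (le_trans zero_le_one hEm1)) hA1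
    have step2 : 2 ^ d * (A * P0) * (A * P1) * (A * Pm1) * A = A ^ 4 * (2 ^ d * P0 * P1 * Pm1) := by ring
    have step3 : A ^ 4 * (2 ^ d * P0 * P1 * Pm1) ≤ A ^ 4 * Q ^ 4 := by
      apply mul_le_mul_of_nonneg_left _ (by positivity)
      calc 2 ^ d * P0 * P1 * Pm1 = _ := hdecomp.symm
      _ ≤ Q ^ 4 := hprod
    calc (2:ℝ) ^ d ≤ 2 ^ d * (A * P0) * (A * P1) * (A * Pm1) * A := step1
    _ = A ^ 4 * (2 ^ d * P0 * P1 * Pm1) := step2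
    _ ≤ A ^ 4 * Q ^ 4 := step3
    _ = (A * Q) ^ 4 := by ring
  -- take logs
  have hd1 : 1 ≤ d := minpoly.natDegree_pos hx.isIntegral
  have hAQ : 1 ≤ A * Q := one_le_mah hx
  have hlog : (d : ℝ) * Real.log 2 ≤ 4 * Real.log (A * Q) := by
    have := Real.log_le_log (by positivity) hmain
    rwa [Real.log_pow, Real.log_pow] at this
  rw [weilHeight_eq]
  have hmaheq : mah x = A * Q := rfl
  rw [hmaheq]
  have hdpos : (0:ℝ) < d := by exact_mod_cast hd1
  have key : Real.log 2 / 4 ≤ Real.log (A * Q) / d := by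
    rw [div_le_div_iff₀ (by norm_num : (0:ℝ) < 4) hdpos]
    linarith [hlog]
  rw [inv_mul_eq_div]
  exact key

lemma choose_le_two_pow (d m : ℕ) : d.choose m ≤ 2 ^ d := by
  rcases le_or_gt m d with h | h
  · calc d.choose m ≤ ∑ i ∈ Finset.range (d + 1), d.choose i :=
        Finset.single_le_sum (fun i _ => Nat.zero_le _) (Finset.mem_range.mpr (Nat.lt_succ_of_le h))
    _ = 2 ^ d := Nat.sum_range_choose d
  · rw [Nat.choose_eq_zero_of_lt h]
    exact Nat.zero_le _

lemma prod_sub_le {s t : Multiset ℂ} (hst : s ≤ t) :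
    ((s.map (fun z => max 1 ‖z‖)).prod) ≤
      ((t.map (fun z => max 1 ‖z‖)).prod) := by
  obtain ⟨u, rfl⟩ := Multiset.le_iff_exists_add.mp hst
  rw [Multiset.map_add, Multiset.prod_add]
  exact le_mul_of_one_le_right (le_trans zero_le_one (one_le_maxprod s)) (one_le_maxprod u)

lemma esymm_bound (hx : IsAlgebraic ℚ x) (m : ℕ) :
    ‖(((intMinpoly x).map (Int.castRingHom ℂ)).roots).esymm m‖ ≤
      ((degQ x).choose m : ℝ) *
        (((intMinpoly x).map (Int.castRingHom ℂ)).roots.map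
          (fun z => max 1 ‖z‖)).prod := by
  set r := ((intMinpoly x).map (Int.castRingHom ℂ)).roots with hrdef
  set Q := (r.map (fun z => max 1 ‖z‖)).prod with hQ
  have h1 : ‖r.esymm m‖ ≤ (((r.powersetCard m).map Multiset.prod).map (fun z : ℂ => ‖z‖)).sum := by
    rw [Multiset.esymm]
    exact abs_msum_le
  have h2 : ∀ a ∈ ((r.powersetCard m).map Multiset.prod).map (fun z : ℂ => ‖z‖), a ≤ Q := by
    intro a ha
    obtain ⟨b, hb, rfl⟩ := Multiset.mem_map.mp ha
    obtain ⟨t, ht, rfl⟩ := Multiset.mem_map.mp hb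
    obtain ⟨hts, htc⟩ := Multiset.mem_powersetCard.mp ht
    calc ‖t.prod‖ = (t.map (fun z : ℂ => ‖z‖)).prod := map_multiset_prod (normHom (α := ℂ)) _
    _ ≤ (t.map (fun z => max 1 ‖z‖)).prod :=
        mprod_le_mprod _ _ (fun a _ => norm_nonneg _) (fun a _ => le_max_right _ _)
    _ ≤ Q := prod_sub_le hts
  have h3 := Multiset.sum_le_card_nsmul _ _ h2
  have hcard : Multiset.card (((r.powersetCard m).map Multiset.prod).map (fun z : ℂ => ‖z‖)) =
      (degQ x).choose m := by
    rw [Multiset.card_map, Multiset.card_map, Multiset.card_powersetCard,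
      card_roots_intMinpolyC hx]
  rw [hcard, nsmul_eq_mul] at h3
  exact le_trans h1 h3

lemma coeff_bound (hx : IsAlgebraic ℚ x) (k : ℕ) :
    (|(intMinpoly x).coeff k| : ℝ) ≤ (2:ℝ) ^ (degQ x) * mah x := by
  have hmah : (0:ℝ) ≤ mah x := le_trans zero_le_one (one_le_mah hx)
  set p := (intMinpoly x).map (Int.castRingHom ℂ) with hp
  have habs : (|(intMinpoly x).coeff k| : ℝ) = ‖p.coeff k‖ := by
    rw [hp, Polynomial.coeff_map]
    show _ = ‖((intMinpoly x).coeff k : ℂ)‖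
    rw [Complex.norm_intCast, ← Int.cast_abs]
  by_cases hk : k ≤ p.natDegree
  · have hcard : Multiset.card p.roots = p.natDegree := by
      rw [card_roots_intMinpolyC hx, natDegree_intMinpolyC hx]
    have hco := Polynomial.coeff_eq_esymm_roots_of_card hcard hk
    rw [habs, hco]
    rw [norm_mul, norm_mul]
    have hminus : ‖(-1 : ℂ) ^ (p.natDegree - k)‖ = 1 := by
      rw [norm_pow]
      simp
    rw [hminus, mul_one, abs_leadingCoeffC]
    have hesymm := esymm_bound hx (p.natDegree - k)
    calc ((intMinpoly x).leadingCoeff.natAbs : ℝ) * ‖p.roots.esymm (p.natDegree - k)‖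
        ≤ ((intMinpoly x).leadingCoeff.natAbs : ℝ) *
          (((degQ x).choose (p.natDegree - k) : ℝ) *
            (p.roots.map (fun z => max 1 ‖z‖)).prod) := by
          apply mul_le_mul_of_nonneg_left _ (Nat.cast_nonneg _)
          exact hesymm
    _ = ((degQ x).choose (p.natDegree - k) : ℝ) * mah x := by rw [mah]; ring
    _ ≤ (2:ℝ) ^ (degQ x) * mah x := by
          apply mul_le_mul_of_nonneg_right _ hmah
          have := choose_le_two_pow (degQ x) (p.natDegree - k)
          calc ((degQ x).choose (p.natDegree - k) : ℝ) ≤ ((2:ℕ) ^ (degQ x) : ℝ) := by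
                exact_mod_cast this
          _ = (2:ℝ) ^ (degQ x) := by push_cast; ring
  · have hk2 : (intMinpoly x).natDegree < k := by
      have hlt : p.natDegree < k := lt_of_not_ge hk
      rwa [hp, natDegree_intMinpolyC hx, ← natDegree_intMinpoly hx] at hlt
    rw [Polynomial.coeff_eq_zero_of_natDegree_lt hk2]
    simp only [abs_zero, Int.cast_zero]
    positivity

lemma poly_finite (N : ℕ) (K : ℤ) :
    {p : Polynomial ℤ | p.natDegree ≤ N ∧ ∀ k, |p.coeff k| ≤ K}.Finite := by
  have hsub : {p : Polynomial ℤ | p.natDegree ≤ N ∧ ∀ k, |p.coeff k| ≤ K} ⊆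
      (fun c : Fin (N + 1) → ℤ => ∑ i : Fin (N + 1), C (c i) * X ^ (i : ℕ)) ''
        (Set.pi Set.univ (fun _ : Fin (N + 1) => Set.Icc (-K) K)) := by
    intro p hp
    refine ⟨fun i => p.coeff i, ?_, ?_⟩
    · intro i _
      rw [Set.mem_Icc]
      constructor
      · linarith [neg_abs_le (p.coeff i), hp.2 (i : ℕ)]
      · linarith [le_abs_self (p.coeff i), hp.2 (i : ℕ)]
    · have hps := Polynomial.as_sum_range' p (N + 1) (Nat.lt_succ_of_le hp.1)
      show ∑ i : Fin (N + 1), C (p.coeff (i : ℕ)) * X ^ (i : ℕ) = p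
      conv_rhs => rw [hps, ← Fin.sum_univ_eq_sum_range (fun i => (Polynomial.monomial i) (p.coeff i)) (N + 1)]
      congr 1
      funext i
      rw [Polynomial.C_mul_X_pow_eq_monomial]
  exact Set.Finite.subset (Set.Finite.image _ (Set.Finite.pi fun _ => Set.finite_Icc _ _)) hsub

lemma finite_bounded (N : ℕ) (C : ℝ) (hC : 0 ≤ C) :
    {x : ℂ | IsAlgebraic ℚ x ∧ degQ x ≤ N ∧ weilHeight x < C}.Finite := by
  set K : ℤ := ⌈(2:ℝ) ^ N * Real.exp (C * N)⌉ with hK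
  set S : Set (Polynomial ℤ) :=
      {p | p.natDegree ≤ N ∧ ∀ k, |p.coeff k| ≤ K} with hS
  have hSfin : S.Finite := poly_finite N K
  have hsub : {x : ℂ | IsAlgebraic ℚ x ∧ degQ x ≤ N ∧ weilHeight x < C} ⊆
      ⋃ p ∈ S \ {0}, {y : ℂ | (p.map (Int.castRingHom ℂ)).IsRoot y} := by
    intro x hx
    obtain ⟨halg, hdeg, hht⟩ := hx
    have hd1 : 1 ≤ degQ x := minpoly.natDegree_pos halg.isIntegral
    have hdpos : (0:ℝ) < degQ x := by exact_mod_cast hd1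
    -- mah bound
    have hmah1 : 1 ≤ mah x := one_le_mah halg
    have hlog : Real.log (mah x) < C * degQ x := by
      have := hht
      rw [weilHeight_eq, inv_mul_eq_div, div_lt_iff₀ hdpos] at this
      linarith [this]
    have hmahlt : mah x ≤ Real.exp (C * N) := by
      have h1 : mah x = Real.exp (Real.log (mah x)) :=
        (Real.exp_log (lt_of_lt_of_le zero_lt_one hmah1)).symm
      rw [h1]
      apply Real.exp_le_exp.mpr
      have h2 : C * (degQ x : ℝ) ≤ C * N := by
        apply mul_le_mul_of_nonneg_left _ hC
        exact_mod_cast hdeg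
      linarith
    -- coefficient bound
    have hcb : ∀ k, |(intMinpoly x).coeff k| ≤ K := by
      intro k
      have h1 := coeff_bound halg k
      have h2 : (2:ℝ) ^ (degQ x) * mah x ≤ (2:ℝ) ^ N * Real.exp (C * N) := by
        apply mul_le_mul
        · apply pow_le_pow_right₀ (by norm_num) hdeg
        · exact hmahlt
        · linarith
        · positivity
      have h3 : (|(intMinpoly x).coeff k| : ℝ) ≤ (K : ℝ) :=
        le_trans (le_trans h1 h2) (Int.le_ceil _)
      exact_mod_cast h3
    apply Set.mem_biUnion (show intMinpoly x ∈ S \ {0} from ?_)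
    · exact isRoot_self halg
    · constructor
      · exact ⟨by rw [natDegree_intMinpoly halg]; exact hdeg, hcb⟩
      · simp only [Set.mem_singleton_iff]
        exact intMinpoly_ne_zero halg
  apply Set.Finite.subset _ hsub
  apply Set.Finite.biUnion (Set.Finite.subset hSfin Set.diff_subset)
  intro p hp
  have hp0 : p ≠ 0 := by
    intro h
    exact hp.2 (by simp [h])
  have hpc : p.map (Int.castRingHom ℂ) ≠ 0 := by
    intro h
    apply hp0
    exact (Polynomial.map_injective _ Int.cast_injective) (by simpa using h)
  apply Set.Finite.subset (p.map (Int.castRingHom ℂ)).roots.toFinset.finite_toSet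
  intro y hy
  simp only [Finset.coe_sort_coe, Multiset.mem_toFinset, Finset.mem_coe]
  exact (Polynomial.mem_roots hpc).mpr hy

end QtrAux

open QtrAux

/-- The field `ℚ^tr` of all totally real algebraic numbers has the `γ`-Northcott property
for every real `γ > 0`. -/
theorem qtr_northcott (γ : ℝ) (hγ : 0 < γ) : NorthcottProp γ QtrSet := by
  intro C hC
  set D : ℝ := Real.log 2 / 4 with hD
  have hDpos : 0 < D := div_pos (Real.log_pos (by norm_num)) (by norm_num)
  set N : ℕ := ⌈(C / D) ^ γ⁻¹⌉₊ with hN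
  have hsub : {a ∈ QtrSet | wheight γ a < C} ⊆
      ({0, 1, -1} : Set ℂ) ∪ {x : ℂ | IsAlgebraic ℚ x ∧ degQ x ≤ N ∧ weilHeight x < C} := by
    intro a ha
    obtain ⟨⟨halg, him⟩, hw⟩ := ha
    by_cases h0 : a = 0
    · left; simp [h0]
    by_cases h1 : a = 1
    · left; simp [h1]
    by_cases hm1 : a = -1
    · left; simp [hm1]
    right
    have hd1 : 1 ≤ degQ a := minpoly.natDegree_pos halg.isIntegral
    have hd1' : (1:ℝ) ≤ (degQ a : ℝ) := by exact_mod_cast hd1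
    have hpow1 : (1:ℝ) ≤ (degQ a : ℝ) ^ γ := Real.one_le_rpow hd1' (le_of_lt hγ)
    have hple : weilHeight a ≤ wheight γ a := by
      rw [wheight]
      exact le_mul_of_one_le_left (weilHeight_nonneg halg) hpow1
    refine ⟨halg, ?_, lt_of_le_of_lt hple hw⟩
    have hsch := schinzel_bound halg him h0 h1 hm1
    have hlt : (degQ a : ℝ) ^ γ < C / D := by
      rw [lt_div_iff₀ hDpos]
      calc (degQ a : ℝ) ^ γ * D ≤ (degQ a : ℝ) ^ γ * weilHeight a :=
            mul_le_mul_of_nonneg_left hsch (by positivity)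
      _ < C := hw
    have hd : (degQ a : ℝ) < (C / D) ^ γ⁻¹ := by
      have h2 : ((degQ a : ℝ) ^ γ) ^ γ⁻¹ < (C / D) ^ γ⁻¹ :=
        Real.rpow_lt_rpow (by positivity) hlt (by positivity)
      rwa [← Real.rpow_mul (by positivity), mul_inv_cancel₀ (ne_of_gt hγ),
        Real.rpow_one] at h2
    have : (degQ a : ℝ) ≤ (N : ℝ) := le_trans hd.le (Nat.le_ceil _)
    exact_mod_cast this
  apply Set.Finite.subset _ hsub
  apply Set.Finite.union
  · exact (Set.finite_singleton (-1)).insert 1 |>.insert 0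
  · exact finite_bounded N C hC.le


end
end
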